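/- arXiv:1408.3754 — 3 statements merged into one kernel-verified Lean document; each statement's English description precedes it below -/
import Mathlib

section
/- (Atkinson factorization) Let K be a commutative ring, λ ∈ K, and R an associative unital K-algebra. Let T : R → R be a K-linear Rota–Baxter operator of weight λ, i.e. T(x)·T(y) = T(x·T(y)) + T(T(x)·y) + λ·T(x·y) for all x, y ∈ R, and set T̃(x) = −λ·x − T(x). Suppose a, b_l, b_r ∈ R satisfy the fixed point equations b_l = 1 + T(b_l·a) and b_r = 1 + T̃(a·b_r). Then b_l·(1 + λ·a)·b_r = 1. -/
/-- **Atkinson factorization.** Let `T` be a `K`-linear Rota–Baxter operator of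
weight `λ` on an associative unital `K`-algebra `R`, and let
`T̃ x = -λ • x - T x`. If `b_l = 1 + T (b_l * a)` and `b_r = 1 + T̃ (a * b_r)`,
then `b_l * (1 + λ • a) * b_r = 1`. -/
theorem atkinson_factorization {K R : Type*} [CommRing K] [Ring R] [Algebra K R]
    (lam : K) (T : R →ₗ[K] R)
    (hRB : ∀ x y : R, T x * T y = T (x * T y) + T (T x * y) + lam • T (x * y))
    (a bl br : R)
    (hl : bl = 1 + T (bl * a))
    (hr : br = 1 + (-(lam • (a * br)) - T (a * br))) :
    bl * (1 + lam • a) * br = 1 := by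
  have h2 : T (bl * a) = bl - 1 := by
    nth_rewrite 2 [hl]; abel
  have h1 : T (a * br) = 1 - lam • (a * br) - br := by
    nth_rewrite 3 [hr]; abel
  have hbr : br = 1 - lam • (a * br) - T (a * br) := by
    rw [h1]; abel
  have key : T (bl * a) * T (a * br) = T (bl * a) - T (a * br) := by
    have h := hRB (bl * a) (a * br)
    calc T (bl * a) * T (a * br)
        = T ((bl*a) * T (a*br)) + T (T (bl*a) * (a*br)) + lam • T ((bl*a) * (a*br)) := h
      _ = T ((bl*a) * (1 - lam • (a*br) - br)) + T ((bl - 1) * (a*br)) + lam • T ((bl*a) * (a*br)) := by rw [h1, h2]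
      _ = T (bl * a) - T (a * br) := by
          rw [mul_sub, mul_sub, sub_mul, one_mul, mul_one, mul_smul_comm, map_sub, map_sub,
            map_sub, map_smul, mul_assoc bl a br]
          abel
  have expand : (1 + T (bl*a)) * (1 + lam • a) * br
      = br + lam • (a*br) + T (bl*a) * br + lam • (T (bl*a) * (a*br)) := by
    simp only [add_mul, one_mul, mul_add, mul_one, smul_mul_assoc, mul_smul_comm, mul_assoc, smul_add]
    abel
  have htubr : T (bl*a) * br = T (a*br) - lam • (T (bl*a) * (a*br)) := by
    nth_rewrite 1 [hbr]
    rw [mul_sub, mul_sub, mul_one, mul_smul_comm, key]; abel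
  nth_rewrite 1 [hl]
  rw [expand, htubr, h1]; abel
end

section
/- Let R be an associative unital ring and T : R → R an additive map satisfying T(T(x)·y) = T(x)·y for all x, y ∈ R. Let a ∈ R and suppose 1 − a is invertible in R. Then the element b := 1 + T(a)·(1 − a)⁻¹ satisfies the fixed point equation b = 1 + T(b·a). (This is the closed-form solution of the Atkinson fixed point equation in this setting.) -/
/-- Closed form of the Atkinson fixed point equation: if `T` is additive and
satisfies the absorption identity `T (T x * y) = T x * y`, and `1 - a` is
invertible, then `b = 1 + T a * (1 - a)⁻¹` solves `b = 1 + T (b * a)`. -/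
theorem atkinson_fixed_point_closed_form {R : Type*} [Ring R] (T : R → R)
    (hadd : ∀ x y : R, T (x + y) = T x + T y)
    (habs : ∀ x y : R, T (T x * y) = T x * y)
    (a : R) (h : IsUnit (1 - a)) :
    1 + T a * Ring.inverse (1 - a) =
      1 + T ((1 + T a * Ring.inverse (1 - a)) * a) := by
  set u := Ring.inverse (1 - a) with hu
  have hinv : u * (1 - a) = 1 := Ring.inverse_mul_cancel _ h
  have hu1 : u = 1 + u * a := by
    have h2 := hinv
    rw [mul_sub, mul_one] at h2
    rw [← h2]; noncomm_ring
  have key : T ((1 + T a * u) * a) = T a * u := by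
    have h1 : (1 + T a * u) * a = a + T a * (u * a) := by noncomm_ring
    rw [h1, hadd, habs]
    calc T a + T a * (u * a) = T a * (1 + u * a) := by noncomm_ring
      _ = T a * u := by rw [← hu1]
  rw [key]
end

section
/- Let R be a commutative unital ring and T : R → R an additive operator that satisfies the identity T(x·y) = T(T(x)·y) + T(x·T(y)) for all x, y ∈ R, and such that T(x)·T(y) = 0 for all x, y ∈ R. Then both T and 1 − T are idempotent: T(T(x)) = T(x) and (1 − T)((1 − T)(x)) = (1 − T)(x) for all x ∈ R (where (1 − T)(x) = x − T(x)). -/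
/-- Let `T` be an additive operator on a commutative unital ring satisfying
`T (x*y) = T (T x * y) + T (x * T y)` and `T x * T y = 0` for all `x, y`.
Then both `T` and `1 - T` are idempotent. -/
theorem simplified_rotaBaxter_idempotent {R : Type*} [CommRing R] (T : R → R)
    (hadd : ∀ x y : R, T (x + y) = T x + T y)
    (hid : ∀ x y : R, T (x * y) = T (T x * y) + T (x * T y))
    (hzero : ∀ x y : R, T x * T y = 0) :
    (∀ x : R, T (T x) = T x) ∧
      (∀ x : R, (x - T x) - T (x - T x) = x - T x) := by
  have h0 : T 0 = 0 := by
    have h := hadd 0 0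
    rw [add_zero] at h
    linear_combination -h
  -- T 1 = 2 * T (T 1)
  have hT1 : T 1 = T (T 1) + T (T 1) := by
    have := hid 1 1
    simpa using this
  -- T (x * T 1) = T (x * T (T 1))
  have hstep : ∀ x : R, T (x * T 1) = T (x * T (T 1)) := by
    intro x
    have := hid x (T 1)
    rw [hzero, h0] at this
    simpa using this
  have hu : ∀ x : R, T (x * T 1) = 0 := by
    intro x
    have h2 : T (x * T 1) = T (x * T (T 1)) + T (x * T (T 1)) := by
      calc T (x * T 1) = T (x * T (T 1) + x * T (T 1)) := by
            rw [← mul_add, ← hT1]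
        _ = T (x * T (T 1)) + T (x * T (T 1)) := hadd _ _
    rw [← hstep x] at h2
    linear_combination -h2
  have hidem : ∀ x : R, T (T x) = T x := by
    intro x
    have := hid x 1
    rw [mul_one, mul_one] at this
    rw [hu x] at this
    linear_combination -this
  refine ⟨hidem, fun x => ?_⟩
  have hneg : ∀ a : R, T (-a) = - T a := by
    intro a
    have := hadd a (-a)
    simp [h0] at this
    linear_combination -this
  have : T (x - T x) = 0 := by
    have := hadd x (-(T x))
    rw [hneg, hidem] at this
    simpa [sub_eq_add_neg] using this
  rw [this, sub_zero]
end
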